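/- For any nonnegative integer k, the sum over l ≥ 0 of q^l / ((q;q)_l · (tq;q)_{l+k}) equals (1/((q;q)_∞ · (tq;q)_∞)) · Σ_{m≥0} (-1)^m q^{m(m+1)/2 + km} t^m, as an identity of formal power series in q and t (or analytic functions for |q| < 1). -/

import Mathlib

open scoped BigOperators

/-- The finite q-Pochhammer symbol `(a;q)_n`. -/
noncomputable def qPoch (a q : ℂ) : ℕ → ℂ
  | 0 => 1
  | n + 1 => qPoch a q n * (1 - a * q ^ n)

/-- The infinite q-Pochhammer symbol `(a;q)_∞`. -/
noncomputable def qPochInf (a q : ℂ) : ℂ := ∏' i : ℕ, (1 - a * q ^ i)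

lemma qPoch_eq_prod (a q : ℂ) (n : ℕ) :
    qPoch a q n = ∏ i ∈ Finset.range n, (1 - a * q ^ i) := by
  induction n with
  | zero => simp [qPoch]
  | succ n ih => rw [qPoch, ih, Finset.prod_range_succ]

lemma norm_term_lt (a q : ℂ) (ha : ‖a‖ < 1) (hq : ‖q‖ < 1) (n : ℕ) : ‖a * q ^ n‖ < 1 := by
  rw [norm_mul, norm_pow]
  calc ‖a‖ * ‖q‖ ^ n ≤ ‖a‖ * 1 := by
        gcongr
        exact pow_le_one₀ (norm_nonneg q) hq.le
    _ < 1 := by simpa using ha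

lemma one_sub_ne (a q : ℂ) (ha : ‖a‖ < 1) (hq : ‖q‖ < 1) (n : ℕ) : 1 - a * q ^ n ≠ 0 := by
  intro h
  have h1 : a * q ^ n = 1 := by linear_combination -h
  have h2 := norm_term_lt a q ha hq n
  rw [h1] at h2
  simp at h2

lemma qPoch_ne_zero (a q : ℂ) (ha : ‖a‖ < 1) (hq : ‖q‖ < 1) (n : ℕ) : qPoch a q n ≠ 0 := by
  rw [qPoch_eq_prod]
  exact Finset.prod_ne_zero_iff.2 fun i _ => one_sub_ne a q ha hq i

lemma norm_term_le (a q : ℂ) (hq : ‖q‖ < 1) (n : ℕ) : ‖a * q ^ n‖ ≤ ‖a‖ := by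
  rw [norm_mul, norm_pow]
  calc ‖a‖ * ‖q‖ ^ n ≤ ‖a‖ * 1 := by
        gcongr; exact pow_le_one₀ (norm_nonneg q) hq.le
    _ = ‖a‖ := by ring

lemma summable_norm_log (a q : ℂ) (ha : ‖a‖ < 1) (hq : ‖q‖ < 1) :
    Summable (fun n => ‖Complex.log (1 - a * q ^ n)‖) := by
  have key : ∀ n : ℕ, ‖Complex.log (1 - a * q ^ n)‖ ≤
      (((1 - ‖a‖)⁻¹ / 2 + 1) * ‖a‖) * ‖q‖ ^ n := by
    intro n
    have hz : ‖-(a * q ^ n)‖ < 1 := by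
      rw [norm_neg]; exact norm_term_lt a q ha hq n
    have hz' : ‖-(a * q ^ n)‖ ≤ ‖a‖ * ‖q‖ ^ n := by
      rw [norm_neg, norm_mul, norm_pow]
    have hza : ‖a‖ * ‖q‖ ^ n ≤ ‖a‖ := by
      calc ‖a‖ * ‖q‖ ^ n ≤ ‖a‖ * 1 := by
            gcongr; exact pow_le_one₀ (norm_nonneg q) hq.le
        _ = ‖a‖ := by ring
    have h1 := Complex.norm_log_one_add_le hz
    have e : (1 : ℂ) + -(a * q ^ n) = 1 - a * q ^ n := by ring
    rw [e] at h1
    refine h1.trans ?_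
    have hinv : (1 - ‖-(a * q ^ n)‖)⁻¹ ≤ (1 - ‖a‖)⁻¹ := by
      apply inv_anti₀ (by linarith) (by linarith [hz'.trans hza])
    calc ‖-(a * q ^ n)‖ ^ 2 * (1 - ‖-(a * q ^ n)‖)⁻¹ / 2 + ‖-(a * q ^ n)‖
        ≤ ‖-(a * q ^ n)‖ * (1 - ‖a‖)⁻¹ / 2 + ‖-(a * q ^ n)‖ := by
          have h2 : ‖-(a * q ^ n)‖ ^ 2 ≤ ‖-(a * q ^ n)‖ := by
            nlinarith [norm_nonneg (-(a * q ^ n))]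
          have h3 : (0:ℝ) ≤ (1 - ‖a‖)⁻¹ := inv_nonneg.2 (by linarith)
          nlinarith [norm_nonneg (-(a * q ^ n)), hinv, hz.le,
            mul_le_mul_of_nonneg_right h2 h3]
      _ = ((1 - ‖a‖)⁻¹ / 2 + 1) * ‖-(a * q ^ n)‖ := by ring
      _ ≤ ((1 - ‖a‖)⁻¹ / 2 + 1) * (‖a‖ * ‖q‖ ^ n) := by
          have h4 : (0:ℝ) ≤ (1 - ‖a‖)⁻¹ := inv_nonneg.2 (by linarith)
          have : (0:ℝ) ≤ (1 - ‖a‖)⁻¹ / 2 + 1 := by linarith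
          exact mul_le_mul_of_nonneg_left hz' this
      _ = (((1 - ‖a‖)⁻¹ / 2 + 1) * ‖a‖) * ‖q‖ ^ n := by ring
  apply Summable.of_nonneg_of_le (fun n => norm_nonneg _) key
  exact ((summable_geometric_of_lt_one (norm_nonneg q) hq).mul_left _)

lemma summable_log (a q : ℂ) (ha : ‖a‖ < 1) (hq : ‖q‖ < 1) :
    Summable (fun n => Complex.log (1 - a * q ^ n)) :=
  (summable_norm_log a q ha hq).of_norm

lemma qPochInf_eq_exp (a q : ℂ) (ha : ‖a‖ < 1) (hq : ‖q‖ < 1) :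
    qPochInf a q = Complex.exp (∑' n : ℕ, Complex.log (1 - a * q ^ n)) := by
  have := Complex.cexp_tsum_eq_tprod (f := fun n => 1 - a * q ^ n)
    (fun n => one_sub_ne a q ha hq n) (summable_log a q ha hq)
  exact this.symm

lemma qPochInf_ne_zero (a q : ℂ) (ha : ‖a‖ < 1) (hq : ‖q‖ < 1) : qPochInf a q ≠ 0 := by
  rw [qPochInf_eq_exp a q ha hq]; exact Complex.exp_ne_zero _

lemma multipliable_qPochInf (a q : ℂ) (ha : ‖a‖ < 1) (hq : ‖q‖ < 1) :
    Multipliable (fun n : ℕ => 1 - a * q ^ n) :=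
  Complex.multipliable_of_summable_log (f := fun n => 1 - a * q ^ n)
    (summable_log a q ha hq)

lemma qPoch_eq_exp (a q : ℂ) (ha : ‖a‖ < 1) (hq : ‖q‖ < 1) (n : ℕ) :
    qPoch a q n = Complex.exp (∑ i ∈ Finset.range n, Complex.log (1 - a * q ^ i)) := by
  rw [qPoch_eq_prod, Complex.exp_sum]
  exact Finset.prod_congr rfl fun i _ => (Complex.exp_log (one_sub_ne a q ha hq i)).symm

lemma qPoch_norm_lb (a q : ℂ) (ha : ‖a‖ < 1) (hq : ‖q‖ < 1) :
    ∃ c : ℝ, 0 < c ∧ ∀ n, c ≤ ‖qPoch a q n‖ := by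
  set S : ℝ := ∑' n : ℕ, ‖Complex.log (1 - a * q ^ n)‖ with hS
  refine ⟨Real.exp (-S), Real.exp_pos _, fun n => ?_⟩
  rw [qPoch_eq_exp a q ha hq n, Complex.norm_exp]
  apply Real.exp_le_exp.2
  have h1 : ‖∑ i ∈ Finset.range n, Complex.log (1 - a * q ^ i)‖ ≤ S := by
    refine (norm_sum_le _ _).trans ?_
    exact Summable.sum_le_tsum _ (fun i _ => norm_nonneg _) (summable_norm_log a q ha hq)
  have h2 := Complex.abs_re_le_norm (∑ i ∈ Finset.range n, Complex.log (1 - a * q ^ i))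
  have := (abs_le.1 (h2.trans h1)).1
  linarith

lemma tendsto_qPoch (a q : ℂ) (ha : ‖a‖ < 1) (hq : ‖q‖ < 1) :
    Filter.Tendsto (fun n => qPoch a q n) Filter.atTop (nhds (qPochInf a q)) := by
  have := (multipliable_qPochInf a q ha hq).hasProd.tendsto_prod_nat
  simpa only [← qPoch_eq_prod, qPochInf] using this

lemma qPoch_mul_qPochInf (a q : ℂ) (ha : ‖a‖ < 1) (hq : ‖q‖ < 1) (n : ℕ) :
    qPoch a q n * qPochInf (a * q ^ n) q = qPochInf a q := by
  have hm : Multipliable (fun i : ℕ => (1 - a * q ^ (i + n))) := by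
    have := multipliable_qPochInf (a * q ^ n) q ((norm_term_le a q hq n).trans_lt ha) hq
    apply this.congr
    intro i
    rw [pow_add]
    ring
  have key := Multipliable.prod_mul_tprod_nat_mul' (f := fun i : ℕ => 1 - a * q ^ i) (k := n) hm
  rw [← qPoch_eq_prod] at key
  have e1 : qPochInf a q = ∏' (i : ℕ), (fun i => 1 - a * q ^ i) i := rfl
  rw [e1, ← key]
  congr 1
  unfold qPochInf
  apply tprod_congr
  intro i
  simp only [pow_add]
  ring

lemma tri (n : ℕ) : n * (n - 1) / 2 + n = n * (n + 1) / 2 := by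
  have h1 : n * (n + 1) = n * (n - 1) + 2 * n := by
    cases n with
    | zero => simp
    | succ m => simp only [Nat.add_sub_cancel]; ring
  obtain ⟨c, hc⟩ := Nat.even_mul_succ_self n
  omega

noncomputable def Fq (q z : ℂ) : ℂ := ∑' n : ℕ, z ^ n / qPoch q q n

noncomputable def Gq (q z : ℂ) : ℂ :=
  ∑' n : ℕ, (-1) ^ n * q ^ (n * (n - 1) / 2) * z ^ n / qPoch q q n

lemma qPoch_norb (q z : ℂ) (hq : ‖q‖ < 1) (hz : ‖z‖ < 1) (u : ℕ → ℂ)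
    (hu : ∀ n, ‖u n‖ ≤ ‖z‖ ^ n) :
    ∃ c : ℝ, 0 < c ∧ ∀ n, ‖u n / qPoch q q n‖ ≤ c⁻¹ * ‖z‖ ^ n := by
  obtain ⟨c, hc, hcb⟩ := qPoch_norm_lb q q hq hq
  refine ⟨c, hc, fun n => ?_⟩
  rw [norm_div, div_eq_mul_inv, mul_comm (c⁻¹)]
  exact mul_le_mul (hu n) (inv_anti₀ hc (hcb n)) (inv_nonneg.2 (norm_nonneg _))
    (pow_nonneg (norm_nonneg _) n)

lemma summable_aux (q z : ℂ) (hq : ‖q‖ < 1) (hz : ‖z‖ < 1) (u : ℕ → ℂ)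
    (hu : ∀ n, ‖u n‖ ≤ ‖z‖ ^ n) : Summable (fun n => u n / qPoch q q n) := by
  obtain ⟨c, hc, hcb⟩ := qPoch_norb q z hq hz u hu
  exact Summable.of_norm_bounded ((summable_geometric_of_lt_one (norm_nonneg z) hz).mul_left c⁻¹) hcb

lemma summable_F (q z : ℂ) (hq : ‖q‖ < 1) (hz : ‖z‖ < 1) :
    Summable (fun n => z ^ n / qPoch q q n) :=
  summable_aux q z hq hz _ (fun n => by rw [norm_pow])

lemma summable_G (q z : ℂ) (hq : ‖q‖ < 1) (hz : ‖z‖ < 1) :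
    Summable (fun n => (-1) ^ n * q ^ (n * (n - 1) / 2) * z ^ n / qPoch q q n) := by
  apply summable_aux q z hq hz
  intro n
  rw [norm_mul, norm_mul, norm_pow, norm_pow, norm_pow, norm_neg, norm_one, one_pow, one_mul]
  calc ‖q‖ ^ (n * (n - 1) / 2) * ‖z‖ ^ n ≤ 1 * ‖z‖ ^ n :=
        mul_le_mul_of_nonneg_right (pow_le_one₀ (norm_nonneg _) hq.le)
          (pow_nonneg (norm_nonneg _) n)
    _ = ‖z‖ ^ n := one_mul _

lemma norm_zq_lt (q z : ℂ) (hq : ‖q‖ < 1) (hz : ‖z‖ < 1) : ‖z * q‖ < 1 := by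
  rw [norm_mul]
  calc ‖z‖ * ‖q‖ ≤ ‖z‖ * 1 := mul_le_mul_of_nonneg_left hq.le (norm_nonneg z)
    _ < 1 := by simpa using hz

lemma qPoch_succ_q (q : ℂ) (n : ℕ) :
    qPoch q q (n + 1) = qPoch q q n * (1 - q ^ (n + 1)) := by
  rw [qPoch, pow_succ']

lemma F_funeq (q z : ℂ) (hq : ‖q‖ < 1) (hz : ‖z‖ < 1) :
    Fq q z * (1 - z) = Fq q (z * q) := by
  have hS : Summable (fun n => z ^ n / qPoch q q n) := summable_F q z hq hz
  have hS' : Summable (fun n => (z * q) ^ n / qPoch q q n) :=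
    summable_F q (z * q) hq (norm_zq_lt q z hq hz)
  have hdiff : Fq q z - Fq q (z * q) = z * Fq q z := by
    have e1 : Fq q z - Fq q (z * q) =
        ∑' n : ℕ, (z ^ n / qPoch q q n - (z * q) ^ n / qPoch q q n) :=
      (Summable.tsum_sub hS hS').symm
    have hSd := hS.sub hS'
    rw [e1, Summable.tsum_eq_zero_add hSd]
    have e2 : ∀ n : ℕ, z ^ (n + 1) / qPoch q q (n + 1) - (z * q) ^ (n + 1) / qPoch q q (n + 1)
        = z * (z ^ n / qPoch q q n) := by
      intro n
      have hd : qPoch q q n ≠ 0 := qPoch_ne_zero q q hq hq n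
      have he : (1 : ℂ) - q ^ (n + 1) ≠ 0 := by
        have := one_sub_ne q q hq hq n
        rwa [← pow_succ'] at this
      rw [qPoch_succ_q]
      field_simp
      ring
    rw [tsum_congr e2]
    simp only [tsum_mul_left]
    simp [Fq]
  have : Fq q (z * q) = Fq q z - z * Fq q z := by rw [← hdiff]; ring
  rw [this]; ring

lemma G_funeq (q z : ℂ) (hq : ‖q‖ < 1) (hz : ‖z‖ < 1) :
    Gq q z = (1 - z) * Gq q (z * q) := by
  have hS : Summable (fun n => (-1) ^ n * q ^ (n * (n - 1) / 2) * z ^ n / qPoch q q n) :=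
    summable_G q z hq hz
  have hS' : Summable (fun n => (-1) ^ n * q ^ (n * (n - 1) / 2) * (z * q) ^ n / qPoch q q n) :=
    summable_G q (z * q) hq (norm_zq_lt q z hq hz)
  have hdiff : Gq q z - Gq q (z * q) = -z * Gq q (z * q) := by
    have e1 : Gq q z - Gq q (z * q) =
        ∑' n : ℕ, ((-1) ^ n * q ^ (n * (n - 1) / 2) * z ^ n / qPoch q q n
          - (-1) ^ n * q ^ (n * (n - 1) / 2) * (z * q) ^ n / qPoch q q n) :=
      (Summable.tsum_sub hS hS').symm
    have hSd := hS.sub hS'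
    rw [e1, Summable.tsum_eq_zero_add hSd]
    have e2 : ∀ n : ℕ,
        ((-1) ^ (n + 1) * q ^ ((n + 1) * (n + 1 - 1) / 2) * z ^ (n + 1) / qPoch q q (n + 1)
          - (-1) ^ (n + 1) * q ^ ((n + 1) * (n + 1 - 1) / 2) * (z * q) ^ (n + 1)
            / qPoch q q (n + 1))
        = -z * ((-1) ^ n * q ^ (n * (n - 1) / 2) * (z * q) ^ n / qPoch q q n) := by
      intro n
      have hd : qPoch q q n ≠ 0 := qPoch_ne_zero q q hq hq n
      have he : (1 : ℂ) - q ^ (n + 1) ≠ 0 := by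
        have := one_sub_ne q q hq hq n
        rwa [← pow_succ'] at this
      have hexp : (n + 1) * (n + 1 - 1) / 2 = n * (n - 1) / 2 + n := by
        have h := tri n
        rw [Nat.add_sub_cancel, Nat.mul_comm (n+1) n]
        omega
      rw [qPoch_succ_q, hexp, pow_add]
      have hq2 : q ^ (n+1) = q * q ^ n := (pow_succ' q n)
      field_simp
      ring
    rw [tsum_congr e2]
    simp only [tsum_mul_left]
    simp [Gq]
  have : Gq q z = Gq q (z * q) + -z * Gq q (z * q) := by rw [← hdiff]; ring
  rw [this]; ring

lemma tsum_sub_one_bound (q z : ℂ) (hq : ‖q‖ < 1) (hz : ‖z‖ < 1) (u : ℕ → ℂ)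
    (hu : ∀ n, ‖u n‖ ≤ 1) (hu0 : u 0 = 1) :
    ∃ K : ℝ, 0 ≤ K ∧ ∀ w : ℂ, ‖w‖ ≤ ‖z‖ →
      ‖(∑' n : ℕ, u n * w ^ n / qPoch q q n) - 1‖ ≤ K * ‖w‖ := by
  obtain ⟨c, hc, hcb⟩ := qPoch_norm_lb q q hq hq
  have hKnn : (0:ℝ) ≤ c⁻¹ * (1 - ‖z‖)⁻¹ := by
    have h1 : (0:ℝ) ≤ c⁻¹ := inv_nonneg.2 hc.le
    have h2 : (0:ℝ) ≤ (1 - ‖z‖)⁻¹ := inv_nonneg.2 (by linarith)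
    exact mul_nonneg h1 h2
  refine ⟨c⁻¹ * (1 - ‖z‖)⁻¹, hKnn, fun w hw => ?_⟩
  have hw1 : ‖w‖ < 1 := lt_of_le_of_lt hw hz
  have hbound : ∀ n, ‖u n * w ^ n‖ ≤ ‖w‖ ^ n := by
    intro n
    rw [norm_mul, norm_pow]
    calc ‖u n‖ * ‖w‖ ^ n ≤ 1 * ‖w‖ ^ n :=
          mul_le_mul_of_nonneg_right (hu n) (pow_nonneg (norm_nonneg _) n)
      _ = ‖w‖ ^ n := one_mul _
  have hsum : Summable (fun n => u n * w ^ n / qPoch q q n) :=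
    summable_aux q w hq hw1 _ hbound
  have e0 : (∑' n : ℕ, u n * w ^ n / qPoch q q n) =
      1 + ∑' n : ℕ, u (n + 1) * w ^ (n + 1) / qPoch q q (n + 1) := by
    rw [Summable.tsum_eq_zero_add hsum, hu0]
    simp [qPoch]
  have htail : ∀ n : ℕ, ‖u (n + 1) * w ^ (n + 1) / qPoch q q (n + 1)‖
      ≤ (c⁻¹ * ‖z‖ ^ n) * ‖w‖ := by
    intro n
    rw [norm_div]
    have h1 : ‖u (n + 1) * w ^ (n + 1)‖ ≤ ‖z‖ ^ n * ‖w‖ := by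
      refine (hbound (n + 1)).trans ?_
      rw [pow_succ]
      exact mul_le_mul_of_nonneg_right (pow_le_pow_left₀ (norm_nonneg w) hw n)
        (norm_nonneg w)
    calc ‖u (n + 1) * w ^ (n + 1)‖ / ‖qPoch q q (n + 1)‖
        ≤ (‖z‖ ^ n * ‖w‖) / c :=
          div_le_div₀ (by positivity) h1 hc (hcb (n + 1))
      _ = (c⁻¹ * ‖z‖ ^ n) * ‖w‖ := by
          rw [div_eq_mul_inv]; ring
  have hg : Summable (fun n : ℕ => (c⁻¹ * ‖z‖ ^ n) * ‖w‖) := by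
    apply Summable.mul_right
    exact (summable_geometric_of_lt_one (norm_nonneg z) hz).mul_left _
  have hnorm : Summable (fun n => ‖u (n + 1) * w ^ (n + 1) / qPoch q q (n + 1)‖) :=
    Summable.of_nonneg_of_le (fun n => norm_nonneg _) htail hg
  rw [e0, add_sub_cancel_left]
  refine (norm_tsum_le_tsum_norm hnorm).trans ?_
  refine (Summable.tsum_le_tsum htail hnorm hg).trans ?_
  rw [tsum_mul_right, tsum_mul_left, tsum_geometric_of_lt_one (norm_nonneg z) hz]

lemma tendsto_one_aux (q z : ℂ) (hq : ‖q‖ < 1) (f : ℂ → ℂ) (K : ℝ)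
    (hb : ∀ w : ℂ, ‖w‖ ≤ ‖z‖ → ‖f w - 1‖ ≤ K * ‖w‖) :
    Filter.Tendsto (fun n => f (z * q ^ n)) Filter.atTop (nhds 1) := by
  have h0 : Filter.Tendsto (fun n => f (z * q ^ n) - 1) Filter.atTop (nhds 0) := by
    refine squeeze_zero_norm (a := fun n => (K * ‖z‖) * ‖q‖ ^ n) (fun n => ?_) ?_
    · refine (hb _ (norm_term_le z q hq n)).trans (le_of_eq ?_)
      rw [norm_mul, norm_pow]
      ring
    · have := (tendsto_pow_atTop_nhds_zero_of_norm_lt_one (x := ‖q‖)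
        (by simpa using hq)).const_mul (K * ‖z‖)
      simpa using this
  have := h0.add (tendsto_const_nhds (x := (1 : ℂ)))
  simpa using this

lemma F_iter (q z : ℂ) (hq : ‖q‖ < 1) (hz : ‖z‖ < 1) (n : ℕ) :
    Fq q z * qPoch z q n = Fq q (z * q ^ n) := by
  induction n with
  | zero => simp [qPoch]
  | succ n ih =>
      have hzn : ‖z * q ^ n‖ < 1 := (norm_term_le z q hq n).trans_lt hz
      calc Fq q z * qPoch z q (n + 1) = (Fq q z * qPoch z q n) * (1 - z * q ^ n) := by
            rw [qPoch]; ring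
        _ = Fq q (z * q ^ n) * (1 - z * q ^ n) := by rw [ih]
        _ = Fq q ((z * q ^ n) * q) := F_funeq q (z * q ^ n) hq hzn
        _ = Fq q (z * q ^ (n + 1)) := by rw [pow_succ]; ring_nf

lemma G_iter (q z : ℂ) (hq : ‖q‖ < 1) (hz : ‖z‖ < 1) (n : ℕ) :
    Gq q z = qPoch z q n * Gq q (z * q ^ n) := by
  induction n with
  | zero => simp [qPoch]
  | succ n ih =>
      have hzn : ‖z * q ^ n‖ < 1 := (norm_term_le z q hq n).trans_lt hz
      calc Gq q z = qPoch z q n * Gq q (z * q ^ n) := ih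
        _ = qPoch z q n * ((1 - z * q ^ n) * Gq q ((z * q ^ n) * q)) := by
            rw [← G_funeq q (z * q ^ n) hq hzn]
        _ = qPoch z q (n + 1) * Gq q (z * q ^ (n + 1)) := by
            rw [qPoch, pow_succ]; ring_nf

lemma F_eq_tsum_u (q z : ℂ) : Fq q z = ∑' n : ℕ, (1 : ℕ → ℂ) n * z ^ n / qPoch q q n := by
  unfold Fq
  exact tsum_congr fun n => by simp

lemma tendsto_F_one (q z : ℂ) (hq : ‖q‖ < 1) (hz : ‖z‖ < 1) :
    Filter.Tendsto (fun n => Fq q (z * q ^ n)) Filter.atTop (nhds 1) := by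
  obtain ⟨K, hK, hb⟩ := tsum_sub_one_bound q z hq hz 1 (fun n => by simp) (by simp)
  exact tendsto_one_aux q z hq (Fq q) K fun w hw => by
    rw [F_eq_tsum_u q w] at *
    exact hb w hw

lemma tendsto_G_one (q z : ℂ) (hq : ‖q‖ < 1) (hz : ‖z‖ < 1) :
    Filter.Tendsto (fun n => Gq q (z * q ^ n)) Filter.atTop (nhds 1) := by
  obtain ⟨K, hK, hb⟩ := tsum_sub_one_bound q z hq hz
    (fun n => (-1) ^ n * q ^ (n * (n - 1) / 2))
    (fun n => by
      rw [norm_mul, norm_pow, norm_neg, norm_one, one_pow, one_mul, norm_pow]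
      exact pow_le_one₀ (norm_nonneg q) hq.le)
    (by simp)
  refine tendsto_one_aux q z hq (Gq q) K fun w hw => ?_
  have e : Gq q w = ∑' n : ℕ, ((-1) ^ n * q ^ (n * (n - 1) / 2)) * w ^ n / qPoch q q n := by
    unfold Gq
    exact tsum_congr fun n => by ring_nf
  rw [e]
  exact hb w hw

lemma F_mul_qPochInf (q z : ℂ) (hq : ‖q‖ < 1) (hz : ‖z‖ < 1) :
    Fq q z * qPochInf z q = 1 := by
  have h1 : Filter.Tendsto (fun n => Fq q z * qPoch z q n) Filter.atTop
      (nhds (Fq q z * qPochInf z q)) :=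
    (tendsto_qPoch z q hz hq).const_mul (Fq q z)
  have h2 : Filter.Tendsto (fun n => Fq q z * qPoch z q n) Filter.atTop (nhds 1) := by
    have := tendsto_F_one q z hq hz
    apply this.congr
    intro n
    exact (F_iter q z hq hz n).symm
  exact tendsto_nhds_unique h1 h2

lemma G_eq_qPochInf (q z : ℂ) (hq : ‖q‖ < 1) (hz : ‖z‖ < 1) :
    Gq q z = qPochInf z q := by
  have h1 : Filter.Tendsto (fun n => qPoch z q n * Gq q (z * q ^ n)) Filter.atTop
      (nhds (qPochInf z q * 1)) :=
    (tendsto_qPoch z q hz hq).mul (tendsto_G_one q z hq hz)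
  have h2 : Filter.Tendsto (fun n => qPoch z q n * Gq q (z * q ^ n)) Filter.atTop
      (nhds (Gq q z)) := by
    apply tendsto_const_nhds.congr
    intro n
    exact G_iter q z hq hz n
  have := tendsto_nhds_unique h2 h1
  simpa using this

noncomputable def aTerm (q t : ℂ) (k l m : ℕ) : ℂ :=
  (q ^ l / qPoch q q l) *
    ((-1) ^ m * q ^ (m * (m - 1) / 2) * (t * q ^ (l + k + 1)) ^ m / qPoch q q m)

set_option maxHeartbeats 1000000 in
lemma summable_aTerm (q t : ℂ) (hq : ‖q‖ < 1) (ht : ‖t‖ < 1) (htq : ‖t * q‖ < 1) (k : ℕ) :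
    Summable (fun p : ℕ × ℕ => aTerm q t k p.1 p.2) := by
  obtain ⟨c, hc, hcb⟩ := qPoch_norm_lb q q hq hq
  have hbnd : ∀ l m : ℕ, ‖aTerm q t k l m‖ ≤ (c⁻¹ * ‖q‖ ^ l) * (c⁻¹ * ‖t * q‖ ^ m) := by
    intro l m
    unfold aTerm
    rw [norm_mul, norm_div, norm_div]
    have h1 : ‖q ^ l‖ / ‖qPoch q q l‖ ≤ c⁻¹ * ‖q‖ ^ l := by
      rw [norm_pow, div_eq_mul_inv, mul_comm]
      exact mul_le_mul (inv_anti₀ hc (hcb l)) (le_refl _) (by positivity)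
        (inv_nonneg.2 hc.le)
    have h2 : ‖(-1 : ℂ) ^ m * q ^ (m * (m - 1) / 2) * (t * q ^ (l + k + 1)) ^ m‖
        / ‖qPoch q q m‖ ≤ c⁻¹ * ‖t * q‖ ^ m := by
      have hnum : ‖(-1 : ℂ) ^ m * q ^ (m * (m - 1) / 2) * (t * q ^ (l + k + 1)) ^ m‖
          ≤ ‖t * q‖ ^ m := by
        rw [norm_mul, norm_mul, norm_pow, norm_pow, norm_pow, norm_neg, norm_one,
          one_pow, one_mul]
        calc ‖q‖ ^ (m * (m - 1) / 2) * ‖t * q ^ (l + k + 1)‖ ^ m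
            ≤ 1 * ‖t * q‖ ^ m := by
              apply mul_le_mul (pow_le_one₀ (norm_nonneg q) hq.le)
              · apply pow_le_pow_left₀ (norm_nonneg _)
                rw [norm_mul, norm_mul, norm_pow]
                apply mul_le_mul_of_nonneg_left _ (norm_nonneg t)
                calc ‖q‖ ^ (l + k + 1) ≤ ‖q‖ ^ 1 :=
                      pow_le_pow_of_le_one (norm_nonneg q) hq.le (by omega)
                  _ = ‖q‖ := pow_one _
              · positivity
              · norm_num
          _ = ‖t * q‖ ^ m := one_mul _
      rw [div_eq_mul_inv, mul_comm c⁻¹]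
      exact mul_le_mul hnum (inv_anti₀ hc (hcb m)) (inv_nonneg.2 (hc.le.trans (hcb m)))
        (by positivity)
    exact mul_le_mul h1 h2 (by positivity) (by positivity)
  have hf1 : Summable (fun l : ℕ => c⁻¹ * ‖q‖ ^ l) :=
    (summable_geometric_of_lt_one (norm_nonneg q) hq).mul_left c⁻¹
  have hf2 : Summable (fun m : ℕ => c⁻¹ * ‖t * q‖ ^ m) :=
    (summable_geometric_of_lt_one (norm_nonneg (t * q)) htq).mul_left c⁻¹
  have hf1' : 0 ≤ (fun l : ℕ => c⁻¹ * ‖q‖ ^ l) := fun l => by positivity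
  have hf2' : 0 ≤ (fun m : ℕ => c⁻¹ * ‖t * q‖ ^ m) := fun m => by positivity
  have hgS : Summable (fun p : ℕ × ℕ => (c⁻¹ * ‖q‖ ^ p.1) * (c⁻¹ * ‖t * q‖ ^ p.2)) :=
    Summable.mul_of_nonneg hf1 hf2 hf1' hf2'
  exact Summable.of_norm_bounded hgS (fun p => hbnd p.1 p.2)

lemma stepA (q t : ℂ) (hq : ‖q‖ < 1) (ht : ‖t‖ < 1) (htq : ‖t * q‖ < 1) (k l : ℕ) :
    q ^ l / (qPoch q q l * qPoch (t * q) q (l + k)) =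
      (∑' m : ℕ, aTerm q t k l m) * (qPochInf (t * q) q)⁻¹ := by
  have hPtq : qPochInf (t * q) q ≠ 0 := qPochInf_ne_zero (t * q) q htq hq
  have hD : qPoch (t * q) q (l + k) ≠ 0 := qPoch_ne_zero (t * q) q htq hq (l + k)
  have hA : qPoch q q l ≠ 0 := qPoch_ne_zero q q hq hq l
  have htql : ‖t * q ^ (l + k + 1)‖ < 1 :=
    lt_of_le_of_lt (norm_term_le t q hq (l + k + 1)) ht
  have hsplit : qPoch (t * q) q (l + k) * qPochInf (t * q ^ (l + k + 1)) q
      = qPochInf (t * q) q := by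
    have h := qPoch_mul_qPochInf (t * q) q htq hq (l + k)
    have e : (t * q) * q ^ (l + k) = t * q ^ (l + k + 1) := by
      rw [pow_succ']; ring
    rwa [e] at h
  have hG : (∑' m : ℕ, aTerm q t k l m)
      = (q ^ l / qPoch q q l) * qPochInf (t * q ^ (l + k + 1)) q := by
    unfold aTerm
    rw [tsum_mul_left]
    congr 1
    have h := G_eq_qPochInf q (t * q ^ (l + k + 1)) hq htql
    rw [← h]
    rfl
  have hPinf : qPochInf (t * q ^ (l + k + 1)) q ≠ 0 := by
    intro h0
    rw [h0, mul_zero] at hsplit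
    exact hPtq hsplit.symm
  rw [hG]
  rw [← hsplit]
  calc q ^ l / (qPoch q q l * qPoch (t * q) q (l + k))
      = q ^ l * ((qPoch q q l)⁻¹ * (qPoch (t * q) q (l + k))⁻¹) := by
        rw [div_eq_mul_inv, mul_inv]
    _ = (q ^ l * ((qPoch q q l)⁻¹ * (qPoch (t * q) q (l + k))⁻¹)) *
          (qPochInf (t * q ^ (l + k + 1)) q * (qPochInf (t * q ^ (l + k + 1)) q)⁻¹) := by
        rw [mul_inv_cancel₀ hPinf, mul_one]
    _ = (q ^ l / qPoch q q l * qPochInf (t * q ^ (l + k + 1)) q) *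
          ((qPoch (t * q) q (l + k))⁻¹ * (qPochInf (t * q ^ (l + k + 1)) q)⁻¹) := by
        rw [div_eq_mul_inv]; ring
    _ = (q ^ l / qPoch q q l * qPochInf (t * q ^ (l + k + 1)) q) *
          (qPoch (t * q) q (l + k) * qPochInf (t * q ^ (l + k + 1)) q)⁻¹ := by
        rw [mul_inv]

lemma stepE (q t : ℂ) (hq : ‖q‖ < 1) (ht : ‖t‖ < 1) (htq : ‖t * q‖ < 1) (k m : ℕ) :
    (∑' l : ℕ, aTerm q t k l m) =
      ((-1) ^ m * q ^ (m * (m + 1) / 2 + k * m) * t ^ m) * (qPochInf q q)⁻¹ := by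
  have hPq : qPochInf q q ≠ 0 := qPochInf_ne_zero q q hq hq
  have hB : qPoch q q m ≠ 0 := qPoch_ne_zero q q hq hq m
  have hzm : ‖q ^ (m + 1)‖ < 1 := by
    rw [norm_pow]
    calc ‖q‖ ^ (m + 1) ≤ ‖q‖ ^ 1 := pow_le_pow_of_le_one (norm_nonneg q) hq.le (by omega)
      _ = ‖q‖ := pow_one _
      _ < 1 := hq
  have hsplit : qPoch q q m * qPochInf (q ^ (m + 1)) q = qPochInf q q := by
    have h := qPoch_mul_qPochInf q q hq hq m
    rwa [← pow_succ'] at h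
  have hF : Fq q (q ^ (m + 1)) = qPoch q q m / qPochInf q q := by
    have h1 := F_mul_qPochInf q (q ^ (m + 1)) hq hzm
    rw [eq_div_iff hPq]
    calc Fq q (q ^ (m + 1)) * qPochInf q q
        = Fq q (q ^ (m + 1)) * (qPoch q q m * qPochInf (q ^ (m + 1)) q) := by rw [hsplit]
      _ = qPoch q q m * (Fq q (q ^ (m + 1)) * qPochInf (q ^ (m + 1)) q) := by ring
      _ = qPoch q q m := by rw [h1, mul_one]
  have hpt : ∀ l : ℕ, aTerm q t k l m =
      ((-1) ^ m * q ^ (m * (m - 1) / 2 + (k + 1) * m) * t ^ m / qPoch q q m) *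
        ((q ^ (m + 1)) ^ l / qPoch q q l) := by
    intro l
    have hA : qPoch q q l ≠ 0 := qPoch_ne_zero q q hq hq l
    unfold aTerm
    have hexp : q ^ l * ((t * q ^ (l + k + 1)) ^ m) =
        q ^ ((k + 1) * m) * t ^ m * (q ^ (m + 1)) ^ l := by
      rw [mul_pow, ← pow_mul, ← pow_mul]
      have h1 : q ^ l * (t ^ m * q ^ ((l + k + 1) * m)) = t ^ m * q ^ (l + (l + k + 1) * m) := by
        rw [pow_add]; ring
      have h2 : q ^ ((k + 1) * m) * t ^ m * q ^ ((m + 1) * l)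
          = t ^ m * q ^ ((k + 1) * m + (m + 1) * l) := by
        rw [pow_add]; ring
      have h3 : l + (l + k + 1) * m = (k + 1) * m + (m + 1) * l := by ring
      rw [h1, h2, h3]
    have hnum2 : q ^ l * ((-1) ^ m * q ^ (m * (m - 1) / 2) * (t * q ^ (l + k + 1)) ^ m) =
        ((-1) ^ m * q ^ (m * (m - 1) / 2 + (k + 1) * m) * t ^ m) * (q ^ (m + 1)) ^ l := by
      rw [pow_add q (m * (m - 1) / 2) ((k + 1) * m)]
      calc q ^ l * ((-1) ^ m * q ^ (m * (m - 1) / 2) * (t * q ^ (l + k + 1)) ^ m)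
          = (-1) ^ m * q ^ (m * (m - 1) / 2) * (q ^ l * (t * q ^ (l + k + 1)) ^ m) := by ring
        _ = (-1) ^ m * q ^ (m * (m - 1) / 2) *
              (q ^ ((k + 1) * m) * t ^ m * (q ^ (m + 1)) ^ l) := by rw [hexp]
        _ = (-1) ^ m * (q ^ (m * (m - 1) / 2) * q ^ ((k + 1) * m)) * t ^ m *
              (q ^ (m + 1)) ^ l := by ring
    rw [div_mul_div_comm, div_mul_div_comm, hnum2, mul_comm (qPoch q q m) (qPoch q q l)]
  rw [tsum_congr hpt, tsum_mul_left]
  have hFq : (∑' l : ℕ, (q ^ (m + 1)) ^ l / qPoch q q l) = Fq q (q ^ (m + 1)) := rfl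
  rw [hFq, hF]
  have hexp2 : m * (m - 1) / 2 + (k + 1) * m = m * (m + 1) / 2 + k * m := by
    have h := tri m
    have h2 : (k + 1) * m = k * m + m := by ring
    omega
  rw [hexp2]
  field_simp

theorem stmt0 (q t : ℂ) (hq : ‖q‖ < 1) (ht : ‖t‖ < 1) (k : ℕ) :
    ∑' l : ℕ, q ^ l / (qPoch q q l * qPoch (t * q) q (l + k)) =
      (1 / (qPochInf q q * qPochInf (t * q) q)) *
        ∑' m : ℕ, (-1) ^ m * q ^ (m * (m + 1) / 2 + k * m) * t ^ m := by
  have htq : ‖t * q‖ < 1 := by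
    rw [norm_mul]
    calc ‖t‖ * ‖q‖ ≤ 1 * ‖q‖ := mul_le_mul_of_nonneg_right ht.le (norm_nonneg q)
      _ = ‖q‖ := one_mul _
      _ < 1 := hq
  have hPq : qPochInf q q ≠ 0 := qPochInf_ne_zero q q hq hq
  have hPtq : qPochInf (t * q) q ≠ 0 := qPochInf_ne_zero (t * q) q htq hq
  have hsum2 : Summable (Function.uncurry (aTerm q t k)) :=
    summable_aTerm q t hq ht htq k
  rw [tsum_congr (fun l => stepA q t hq ht htq k l), tsum_mul_right]
  have hfub : (∑' l : ℕ, ∑' m : ℕ, aTerm q t k l m)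
      = ∑' m : ℕ, ∑' l : ℕ, aTerm q t k l m := Summable.tsum_comm hsum2.prod_symm
  rw [hfub, tsum_congr (fun m => stepE q t hq ht htq k m), tsum_mul_right]
  rw [one_div, mul_inv]
  ring
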